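/- Let p be an odd prime and n ≥ 2. Then the family of complex matrices (R_n(T))_{T ∈ Σ₃(p)}, indexed by the elements T of Σ₃(p), is linearly independent over ℂ. -/
import Mathlib


/-- The 6-dimensional phase space `V₆ = (Fin 3 → ZMod p) × (Fin 3 → ZMod p)`. -/
abbrev V6 (p : ℕ) := (Fin 3 → ZMod p) × (Fin 3 → ZMod p)

/-- Dot product on `Fin 3 → ZMod p`. -/
def dotP {p : ℕ} (x y : Fin 3 → ZMod p) : ZMod p := ∑ i, x i * y i

/-- The bilinear form `β((x⃗,y⃗),(x⃗',y⃗')) = x⃗·x⃗' − y⃗·y⃗'`. -/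
def betaF {p : ℕ} (v w : V6 p) : ZMod p := dotP v.1 w.1 - dotP v.2 w.2

/-- The all-ones vector `𝟙₆`. -/
def onesV (p : ℕ) : V6 p := (fun _ => 1, fun _ => 1)

/-- `Σ₃(p)`: the set of Lagrangian stochastic subspaces of `V₆`. -/
def Sigma3 (p : ℕ) : Set (Submodule (ZMod p) (V6 p)) :=
  {T | Module.finrank (ZMod p) T = 3 ∧ (∀ v ∈ T, ∀ w ∈ T, betaF v w = 0) ∧ onesV p ∈ T}

open Classical in
/-- The matrix `R_n(T)` with `R_n(T)_{x,y} = ∏_{k < n} [ (x k, y k) ∈ T ]`. -/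
noncomputable def RN (p n : ℕ) (T : Submodule (ZMod p) (V6 p)) :
    Matrix (Fin n → Fin 3 → ZMod p) (Fin n → Fin 3 → ZMod p) ℂ :=
  fun x y => ∏ k : Fin n, if ((x k, y k) : V6 p) ∈ T then 1 else 0

/-- Any 3-dimensional subspace containing a nonzero vector `x` is spanned by `x`
together with two further elements. -/
lemma exists_span_triple {K V : Type*} [Field K] [AddCommGroup V] [Module K V]
    [FiniteDimensional K V] (T : Submodule K V) (h3 : Module.finrank K T = 3)
    (x : V) (hx : x ∈ T) (hx0 : x ≠ 0) :
    ∃ t1 ∈ T, ∃ t2 ∈ T, Submodule.span K {x, t1, t2} = T := by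
  have h1 : ¬ T ≤ Submodule.span K {x} := by
    intro h
    have := Submodule.finrank_mono h
    rw [h3, finrank_span_singleton hx0] at this
    omega
  obtain ⟨t1, ht1T, ht1⟩ := SetLike.not_le_iff_exists.mp h1
  have hlt1 : Submodule.span K {x} < Submodule.span K {x, t1} := by
    refine lt_of_le_of_ne (Submodule.span_mono (by intro a ha; simp_all)) ?_
    intro h
    exact ht1 (h ▸ Submodule.subset_span (by simp))
  have h2 : ¬ T ≤ Submodule.span K ({x, t1} : Set V) := by
    intro h
    have hm := Submodule.finrank_mono h
    have := Submodule.finrank_lt_finrank_of_lt hlt1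
    rw [finrank_span_singleton hx0] at this
    have hc : Module.finrank K (Submodule.span K ({x, t1} : Set V)) ≤ 2 := by
      have hr : Set.range ![x, t1] = ({x, t1} : Set V) := by
        ext a
        simp [Fin.exists_fin_two, or_comm]
      have := finrank_range_le_card (R := K) ![x, t1]
      rw [Set.finrank, hr] at this
      simpa using this
    rw [h3] at hm
    omega
  obtain ⟨t2, ht2T, ht2⟩ := SetLike.not_le_iff_exists.mp h2
  have hlt2 : Submodule.span K ({x, t1} : Set V) < Submodule.span K {x, t1, t2} := by
    refine lt_of_le_of_ne (Submodule.span_mono (by intro a ha; simp_all; tauto)) ?_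
    intro h
    exact ht2 (h ▸ Submodule.subset_span (by simp))
  refine ⟨t1, ht1T, t2, ht2T, ?_⟩
  have hle : Submodule.span K {x, t1, t2} ≤ T := by
    rw [Submodule.span_le]
    intro a ha
    simp only [Set.mem_insert_iff, Set.mem_singleton_iff] at ha
    rcases ha with rfl | rfl | rfl <;> assumption
  refine Submodule.eq_of_le_of_finrank_le hle ?_
  rw [h3]
  have g1 : 1 ≤ Module.finrank K (Submodule.span K ({x} : Set V)) := by
    rw [finrank_span_singleton hx0]
  have g2 := Submodule.finrank_lt_finrank_of_lt hlt1
  have g3 := Submodule.finrank_lt_finrank_of_lt hlt2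
  omega

/-- For `p` an odd prime and `n ≥ 2`, the family of matrices `(R_n(T))_{T ∈ Σ₃(p)}`
is linearly independent over `ℂ`. -/
theorem linearIndependent_RN (p n : ℕ) [Fact p.Prime] (hodd : p ≠ 2) (hn : 2 ≤ n) :
    LinearIndependent ℂ (fun T : (Sigma3 p) => RN p n (T : Submodule (ZMod p) (V6 p))) := by
  classical
  rw [linearIndependent_iff']
  intro s g hsum T₀ hT₀s
  obtain ⟨hrk, -, hones⟩ := T₀.2
  have hones0 : onesV p ≠ 0 := by
    intro h
    have := congrFun (congrArg Prod.fst h) 0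
    exact one_ne_zero this
  obtain ⟨t1, ht1T, t2, ht2T, hspan⟩ :=
    exists_span_triple (T₀ : Submodule (ZMod p) (V6 p)) hrk (onesV p) hones hones0
  -- the test entry
  set X : Fin n → Fin 3 → ZMod p :=
    fun k => if (k : ℕ) = 0 then t1.1 else if (k : ℕ) = 1 then t2.1 else fun _ => 1 with hX
  set Y : Fin n → Fin 3 → ZMod p :=
    fun k => if (k : ℕ) = 0 then t1.2 else if (k : ℕ) = 1 then t2.2 else fun _ => 1 with hY
  have hxy : ∀ k : Fin n, ((X k, Y k) : V6 p)
      = if (k : ℕ) = 0 then t1 else if (k : ℕ) = 1 then t2 else onesV p := by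
    intro k
    by_cases h0 : (k : ℕ) = 0
    · simp [hX, hY, h0]
    · by_cases h1 : (k : ℕ) = 1 <;> simp [hX, hY, h0, h1, onesV]
  have hentry : ∀ S : (Sigma3 p), RN p n (S : Submodule (ZMod p) (V6 p)) X Y
      = if S = T₀ then 1 else 0 := by
    intro S
    by_cases hST : S = T₀
    · rw [if_pos hST, hST]
      unfold RN
      apply Finset.prod_eq_one
      intro k _
      rw [if_pos]
      rw [hxy k]
      split_ifs with h0 h1
      · exact ht1T
      · exact ht2T
      · exact hones
    · rw [if_neg hST]
      -- S ≠ T₀, so t1 ∉ S or t2 ∉ S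
      have hnot : t1 ∉ (S : Submodule (ZMod p) (V6 p)) ∨ t2 ∉ (S : Submodule (ZMod p) (V6 p)) := by
        by_contra h
        push_neg at h
        obtain ⟨h1, h2⟩ := h
        have hle : (T₀ : Submodule (ZMod p) (V6 p)) ≤ (S : Submodule (ZMod p) (V6 p)) := by
          rw [← hspan, Submodule.span_le]
          intro a ha
          simp only [Set.mem_insert_iff, Set.mem_singleton_iff] at ha
          rcases ha with rfl | rfl | rfl
          · exact S.2.2.2
          · exact h1
          · exact h2
        have heq : (T₀ : Submodule (ZMod p) (V6 p)) = (S : Submodule (ZMod p) (V6 p)) :=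
          Submodule.eq_of_le_of_finrank_le hle (by rw [hrk, S.2.1])
        exact hST (Subtype.ext heq.symm)
      unfold RN
      rcases hnot with hmem | hmem
      · apply Finset.prod_eq_zero (Finset.mem_univ (⟨0, by omega⟩ : Fin n))
        rw [if_neg]
        rw [hxy]
        simpa using hmem
      · apply Finset.prod_eq_zero (Finset.mem_univ (⟨1, by omega⟩ : Fin n))
        rw [if_neg]
        rw [hxy]
        simpa using hmem
  have hval := congrFun (congrFun hsum X) Y
  simp only [Matrix.sum_apply, Matrix.zero_apply, Matrix.smul_apply, smul_eq_mul] at hval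
  simp only [hentry, mul_ite, mul_one, mul_zero] at hval
  rwa [Finset.sum_ite_eq' s T₀ g, if_pos hT₀s] at hval
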